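/- For every facial path P of length 2h in a plane graph G with fixed face orientations and fixed labelings of the two appearances of each edge, and every edge e of P lying in the second half of P, the map P ↦ v(e,P) = (h, q, a, o) is injective: given e and the vector v, the path P is uniquely determined. -/

import Mathlib

/-- A (connected) plane graph presented combinatorially by the oriented boundary
walks of its faces, where every edge appears exactly twice among all boundary
walks, together with a fixed labeling (by `1` and `2`, here `Fin 2`) of the two
appearances of each edge: `app e a = (i, j)` records that the appearance of `e`
labeled `a` is at position `j` of the boundary walk of the `i`-th face. -/
structure LabeledFacialGraph (E : Type*) [DecidableEq E] where
  faces : List (List E)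
  appears_twice : ∀ e : E, ((faces.map fun w => w.count e).sum) = 2
  app : E → Fin 2 → ℕ × ℕ
  app_valid : ∀ e a, ∃ w, faces[(app e a).1]? = some w ∧
      w[(app e a).2]? = some e
  app_inj : ∀ e, app e 0 ≠ app e 1

/-- `P` occurs as a segment of the boundary walk `w`, read cyclically, starting
at position `s`. -/
def SegAt {E : Type*} (w : List E) (s : ℕ) (P : List E) : Prop :=
  ∀ t < P.length, P[t]? = w[(s + t) % w.length]?

/-- `IsV G e P (h, q, a, o)` encodes the vector `v(e,P) = (h, q, a, o)` of the
paper: `P` is a facial path of length `2h` whose `q`-th edge (with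
`q ∈ [h+1, 2h]`, i.e. `e` lies in the second half of `P`) is `e`; the string
`P` (if `o = 1`) or its reverse (if `o = 2`) occurs in the oriented boundary
walk of a face so that the corresponding occurrence of `e` is its appearance
labeled `a`. -/
def IsV {E : Type*} [DecidableEq E] (G : LabeledFacialGraph E) (e : E)
    (P : List E) (v : ℕ × ℕ × Fin 2 × Fin 2) : Prop :=
  match v with
  | (h, q, a, o) =>
    1 ≤ h ∧ P.length = 2 * h ∧ h + 1 ≤ q ∧ q ≤ 2 * h ∧ P[q - 1]? = some e ∧
    P.Nodup ∧
    ∃ w, G.faces[(G.app e a).1]? = some w ∧ P.length ≤ w.length ∧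
      ((o = 0 ∧ ∃ s, SegAt w s P ∧ (s + (q - 1)) % w.length = (G.app e a).2) ∨
       (o = 1 ∧ ∃ s, SegAt w s P.reverse ∧ (s + (2 * h - q)) % w.length = (G.app e a).2))


lemma seg_eq_of_mod {E : Type*} (w : List E) (s s' : ℕ) (A B : List E)
    (hA : SegAt w s A) (hB : SegAt w s' B) (hlen : A.length = B.length)
    (hmod : s ≡ s' [MOD w.length]) : A = B := by
  apply List.ext_getElem?
  intro n
  by_cases hn : n < A.length
  · rw [hA n hn, hB n (hlen ▸ hn)]
    congr 1
    exact hmod.add_right n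
  · rw [List.getElem?_eq_none (by omega), List.getElem?_eq_none (by omega)]

/-- Given the edge `e` and the vector `v(e,P) = (h, q, a, o)`, the facial path
`P` is uniquely determined; i.e. `P ↦ v(e,P)` is injective. -/
theorem stmt_17 {E : Type*} [DecidableEq E] (G : LabeledFacialGraph E) (e : E)
    (P P' : List E) (v : ℕ × ℕ × Fin 2 × Fin 2)
    (hP : IsV G e P v) (hP' : IsV G e P' v) : P = P' := by
  obtain ⟨h, q, a, o, rfl⟩ : ∃ h q a o, v = (h, q, a, o) := ⟨v.1, v.2.1, v.2.2.1, v.2.2.2, rfl⟩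
  obtain ⟨h1, hl, hq1, hq2, hget, hnd, w, hw, hlen, hc⟩ := hP
  obtain ⟨_, hl', _, _, hget', hnd', w', hw', hlen', hc'⟩ := hP'
  rw [hw] at hw'
  obtain rfl : w = w' := by injection hw'
  have hwpos : 0 < w.length := by omega
  rcases hc with ⟨ho, s, hseg, hs⟩ | ⟨ho, s, hseg, hs⟩ <;>
    rcases hc' with ⟨ho', s', hseg', hs'⟩ | ⟨ho', s', hseg', hs'⟩
  · exact seg_eq_of_mod w s s' P P' hseg hseg' (by omega)
      (Nat.ModEq.add_right_cancel' (q-1) (by rw [Nat.ModEq, hs, hs']))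
  · rw [ho] at ho'; exact absurd ho' (by decide)
  · rw [ho] at ho'; exact absurd ho' (by decide)
  · have := seg_eq_of_mod w s s' P.reverse P'.reverse hseg hseg'
      (by simp; omega) (Nat.ModEq.add_right_cancel' (2*h-q) (by rw [Nat.ModEq, hs, hs']))
    exact List.reverse_injective this
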